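/- Let X be an alphabet and U, V ⊆ X with U ∩ V = ∅. Let r ∈ X*·U, x ∈ U⁺, y ∈ (X∖U)⁺, and s ∈ X* not starting with a letter of U. Then f_V(rxys) ≤ f_V(ryxs), where f_V(w) counts the maximal nonempty blocks of letters from V in w. -/

import Mathlib

/-- `blockCount p w` is the number of maximal nonempty blocks of letters
satisfying `p` in the word `w`. -/
def blockCount {X : Type*} (p : X → Bool) (w : List X) : ℕ :=
  ((w.map p).destutter (· ≠ ·)).count true

/-- Counter of maximal `true` blocks, carrying the previous letter. -/
def cbAux : Bool → List Bool → ℕ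
  | _, [] => 0
  | prev, b :: l => (if b && !prev then 1 else 0) + cbAux b l

lemma count_destutter' (a : Bool) (l : List Bool) :
    (List.destutter' (· ≠ ·) a l).count true
      = (if a then 1 else 0) + cbAux a l := by
  induction l generalizing a with
  | nil => cases a <;> simp [List.destutter', cbAux]
  | cons b l ih =>
    rw [List.destutter']
    by_cases h : a ≠ b
    · simp only [if_pos h, List.count_cons, ih b, cbAux]
      cases a <;> cases b <;> simp_all <;> omega
    · push_neg at h
      subst h
      simp only [ne_eq, not_true_eq_false, if_false, ih a, cbAux]
      cases a <;> simp

lemma blockCount_eq_cbAux {X : Type*} (p : X → Bool) (w : List X) :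
    blockCount p w = cbAux false (w.map p) := by
  unfold blockCount
  cases hw : w.map p with
  | nil => simp [List.destutter, cbAux]
  | cons b l =>
    rw [List.destutter, count_destutter', cbAux]
    cases b <;> simp

lemma cbAux_append (prev : Bool) (l1 l2 : List Bool) :
    cbAux prev (l1 ++ l2) = cbAux prev l1 + cbAux (l1.getLastD prev) l2 := by
  induction l1 generalizing prev with
  | nil => simp [cbAux]
  | cons b l ih =>
    rw [List.cons_append, cbAux, cbAux, ih b, List.getLastD_cons]
    omega

lemma getLastD_append2 (prev : Bool) (l1 l2 : List Bool) :
    (l1 ++ l2).getLastD prev = l2.getLastD (l1.getLastD prev) := by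
  induction l1 generalizing prev with
  | nil => simp
  | cons b l ih => rw [List.cons_append, List.getLastD_cons, List.getLastD_cons, ih]

lemma cbAux_all_false (prev : Bool) (l : List Bool)
    (h : ∀ b ∈ l, b = false) : cbAux prev l = 0 := by
  induction l generalizing prev with
  | nil => rfl
  | cons b l ih =>
    have hb : b = false := h b (by simp)
    subst hb
    simp [cbAux, ih false fun c hc => h c (by simp [hc])]

lemma cbAux_le (b : Bool) (l : List Bool) : cbAux b l ≤ cbAux false l := by
  cases b
  · exact le_refl _
  · cases l with
    | nil => exact le_refl _
    | cons c l => cases c <;> simp [cbAux]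

lemma getLastD_all_false (prev : Bool) (l : List Bool) (hne : l ≠ [])
    (h : ∀ b ∈ l, b = false) : l.getLastD prev = false := by
  rw [List.getLastD_eq_getLast? , List.getLast?_eq_getLast hne, Option.getD_some]
  exact h _ (List.getLast_mem hne)

/-- Lemma on block counts: with `U ∩ V = ∅`, if `r` ends in a letter of `U`,
`x ∈ U⁺`, `y ∈ (X∖U)⁺`, and `s` does not start with a letter of `U`, then
the number of `V`-blocks of `rxys` is at most that of `ryxs`. -/
theorem stmt_12 {X : Type*} [Fintype X] (U V : Set X)
    [DecidablePred (· ∈ V)] (hUV : U ∩ V = ∅)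
    (r x y s : List X)
    (hr : ∃ r' : List X, ∃ a ∈ U, r = r' ++ [a])
    (hx : x ≠ [] ∧ ∀ a ∈ x, a ∈ U)
    (hy : y ≠ [] ∧ ∀ a ∈ y, a ∉ U)
    (hs : ∀ a : X, s.head? = some a → a ∉ U) :
    blockCount (fun a => decide (a ∈ V)) (r ++ x ++ y ++ s) ≤
      blockCount (fun a => decide (a ∈ V)) (r ++ y ++ x ++ s) := by
  set p : X → Bool := fun a => decide (a ∈ V) with hp
  have hU : ∀ a ∈ U, p a = false := by
    intro a ha
    simp only [hp, decide_eq_false_iff_not]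
    intro hv
    exact absurd (Set.mem_inter ha hv) (by simp [hUV])
  obtain ⟨r', a, haU, hr⟩ := hr
  -- last of (map p r) is false
  have hmr : (r.map p).getLastD false = false := by
    rw [hr]
    simp [hU a haU]
  have hmx0 : ∀ prev, cbAux prev (x.map p) = 0 := fun prev =>
    cbAux_all_false prev _ (by
      intro b hb
      obtain ⟨c, hc, rfl⟩ := List.mem_map.mp hb
      exact hU c (hx.2 c hc))
  have hmxlast : ∀ prev, (x.map p).getLastD prev = false := fun prev =>
    getLastD_all_false prev _ (by simpa using hx.1) (by
      intro b hb
      obtain ⟨c, hc, rfl⟩ := List.mem_map.mp hb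
      exact hU c (hx.2 c hc))
  rw [blockCount_eq_cbAux, blockCount_eq_cbAux]
  simp only [List.map_append, List.append_assoc]
  simp only [cbAux_append, getLastD_append2, hmr, hmx0, hmxlast]
  have := cbAux_le ((y.map p).getLastD false) (s.map p)
  omega
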